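/- arXiv:1701.07099 — 5 statements merged into one kernel-verified Lean document; each statement's English description precedes it below -/
import Mathlib

section
/- Let p₁ and p₂ be probability vectors on {1,…,M} with full support, let l ∈ [0, log₂ M], and let S be the set of M×M row-stochastic matrices W satisfying Σ_{j=1}^{M} max_i W_{ij} ≤ 2^l. Suppose W* ∈ S has an all-zero column j₀ (W*_{i j₀} = 0 for all i), and let W̄ be the matrix obtained from W* by interchanging column j₀ with some other column j₁. Then for every λ ∈ [0,1], the matrix λW* + (1−λ)W̄ lies in S and satisfies D(p₁(λW* + (1−λ)W̄) ‖ p₂(λW* + (1−λ)W̄)) = D(p₁W* ‖ p₂W*). In particular, if W* is optimal for maximizing D(p₁W ‖ p₂W) over S and has a zero column, then infinitely many matrices in S are optimal. -/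
/-- The maximum of column `j` of the matrix `W` (entries `W i j`). -/
noncomputable def colMax {M : ℕ} (hM : 1 ≤ M) (W : Fin M → Fin M → ℝ) (j : Fin M) : ℝ :=
  Finset.univ.sup' (Finset.univ_nonempty_iff.mpr ⟨⟨0, hM⟩⟩) (fun i => W i j)

/-- `W` is a row-stochastic `M × M` matrix whose maximal leakage is at most `l` bits. -/
noncomputable def Feasible {M : ℕ} (hM : 1 ≤ M) (l : ℝ) (W : Fin M → Fin M → ℝ) : Prop :=
  (∀ i j, 0 ≤ W i j) ∧ (∀ i, ∑ j, W i j = 1) ∧ ∑ j, colMax hM W j ≤ (2 : ℝ) ^ l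

/-- Output distribution `pW` of the mechanism `W` applied to input distribution `p`. -/
def outDist {M : ℕ} (p : Fin M → ℝ) (W : Fin M → Fin M → ℝ) (j : Fin M) : ℝ :=
  ∑ i, p i * W i j

/-- Relative entropy `D(q ‖ r) = Σ_j q_j log₂ (q_j / r_j)` (in bits). -/
noncomputable def klDiv2 {M : ℕ} (q r : Fin M → ℝ) : ℝ :=
  ∑ j, q j * Real.logb 2 (q j / r j)

lemma cancel_logb (c a b : ℝ) (hc : 0 ≤ c) :
    (c * a) * Real.logb 2 ((c * a) / (c * b)) = c * (a * Real.logb 2 (a / b)) := by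
  rcases eq_or_lt_of_le hc with h | h
  · simp [← h]
  · rw [mul_div_mul_left a b (ne_of_gt h)]; ring

lemma sup'_mul {M : ℕ} (hM : 1 ≤ M) (c : ℝ) (hc : 0 ≤ c) (f : Fin M → ℝ) :
    (Finset.univ.sup' (Finset.univ_nonempty_iff.mpr ⟨⟨0, hM⟩⟩) (fun i => c * f i) : ℝ)
      = c * Finset.univ.sup' (Finset.univ_nonempty_iff.mpr ⟨⟨0, hM⟩⟩) f := by
  rw [Finset.comp_sup'_eq_sup'_comp _ (fun x => c * x)
    (fun x y => by simpa using mul_max_of_nonneg x y hc)]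
  rfl

lemma key {M : ℕ} (hM : 1 ≤ M) (p₁ p₂ : Fin M → ℝ)
    (l : ℝ)
    (Wstar : Fin M → Fin M → ℝ) (hWstar : Feasible hM l Wstar)
    (j₀ j' : Fin M) (hj : j' ≠ j₀) (hzero : ∀ i, Wstar i j₀ = 0)
    (lam : ℝ) (hlam : lam ∈ Set.Icc (0 : ℝ) 1) :
    Feasible hM l (fun i j => lam * Wstar i j + (1 - lam) * Wstar i (Equiv.swap j₀ j' j)) ∧
    klDiv2 (outDist p₁ (fun i j => lam * Wstar i j + (1 - lam) * Wstar i (Equiv.swap j₀ j' j)))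
           (outDist p₂ (fun i j => lam * Wstar i j + (1 - lam) * Wstar i (Equiv.swap j₀ j' j))) =
      klDiv2 (outDist p₁ Wstar) (outDist p₂ Wstar) := by
  obtain ⟨hlam0, hlam1⟩ := hlam
  have hlam1' : (0:ℝ) ≤ 1 - lam := by linarith
  obtain ⟨hnn, hrow, hcol⟩ := hWstar
  set σ := Equiv.swap j₀ j' with hσ
  have hσ0 : σ j₀ = j' := Equiv.swap_apply_left j₀ j'
  have hσ1 : σ j' = j₀ := Equiv.swap_apply_right j₀ j'
  have hcolzero : colMax hM Wstar j₀ = 0 := by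
    unfold colMax
    simp only [hzero]
    exact Finset.sup'_const _ 0
  -- column maxima of the convex combination
  have hcolMax : ∀ j, colMax hM (fun i j => lam * Wstar i j + (1 - lam) * Wstar i (σ j)) j
      = lam * colMax hM Wstar j + (1 - lam) * colMax hM Wstar (σ j) := by
    intro j
    by_cases h0 : j = j₀
    · rw [h0, hσ0]
      unfold colMax
      have e : (fun i => lam * Wstar i j₀ + (1 - lam) * Wstar i (σ j₀))
          = fun i => (1 - lam) * Wstar i j' := by
        funext i; rw [hzero i, hσ0]; ring
      rw [e, sup'_mul hM _ hlam1']
      have e2 : (Finset.univ.sup' (Finset.univ_nonempty_iff.mpr ⟨⟨0, hM⟩⟩)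
          (fun i => Wstar i j₀) : ℝ) = 0 := hcolzero
      rw [e2]; ring
    by_cases h1 : j = j'
    · rw [h1, hσ1]
      unfold colMax
      have e : (fun i => lam * Wstar i j' + (1 - lam) * Wstar i (σ j'))
          = fun i => lam * Wstar i j' := by
        funext i; rw [hσ1, hzero i]; ring
      rw [e, sup'_mul hM _ hlam0]
      have e2 : (Finset.univ.sup' (Finset.univ_nonempty_iff.mpr ⟨⟨0, hM⟩⟩)
          (fun i => Wstar i j₀) : ℝ) = 0 := hcolzero
      rw [e2]; ring
    · have hσj : σ j = j := Equiv.swap_apply_of_ne_of_ne h0 h1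
      rw [hσj]
      unfold colMax
      have e : (fun i => lam * Wstar i j + (1 - lam) * Wstar i (σ j))
          = fun i => Wstar i j := by
        funext i; rw [hσj]; ring
      rw [e]; ring
  have hFeas : Feasible hM l (fun i j => lam * Wstar i j + (1 - lam) * Wstar i (σ j)) := by
    refine ⟨fun i j => add_nonneg (mul_nonneg hlam0 (hnn i j)) (mul_nonneg hlam1' (hnn i _)), ?_, ?_⟩
    · intro i
      rw [Finset.sum_add_distrib, ← Finset.mul_sum, ← Finset.mul_sum,
        Equiv.sum_comp σ (Wstar i), hrow]
      ring
    · calc ∑ j, colMax hM (fun i j => lam * Wstar i j + (1 - lam) * Wstar i (σ j)) j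
          = ∑ j, (lam * colMax hM Wstar j + (1 - lam) * colMax hM Wstar (σ j)) :=
            Finset.sum_congr rfl (fun j _ => hcolMax j)
        _ = lam * (∑ j, colMax hM Wstar j) + (1 - lam) * ∑ j, colMax hM Wstar (σ j) := by
            rw [Finset.sum_add_distrib, Finset.mul_sum, Finset.mul_sum]
        _ = ∑ j, colMax hM Wstar j := by rw [Equiv.sum_comp σ (colMax hM Wstar)]; ring
        _ ≤ (2:ℝ) ^ l := hcol
  refine ⟨hFeas, ?_⟩
  -- output distributions
  have hout : ∀ p : Fin M → ℝ, ∀ j,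
      outDist p (fun i j => lam * Wstar i j + (1 - lam) * Wstar i (σ j)) j
      = lam * outDist p Wstar j + (1 - lam) * outDist p Wstar (σ j) := by
    intro p j
    unfold outDist
    rw [Finset.mul_sum, Finset.mul_sum, ← Finset.sum_add_distrib]
    exact Finset.sum_congr rfl (fun i _ => by ring)
  have hq0 : ∀ p : Fin M → ℝ, outDist p Wstar j₀ = 0 := by
    intro p; unfold outDist; simp [hzero]
  set T : Fin M → ℝ := fun j => outDist p₁ Wstar j *
    Real.logb 2 (outDist p₁ Wstar j / outDist p₂ Wstar j) with hT
  have hterm : ∀ j,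
      outDist p₁ (fun i j => lam * Wstar i j + (1 - lam) * Wstar i (σ j)) j *
        Real.logb 2 (outDist p₁ (fun i j => lam * Wstar i j + (1 - lam) * Wstar i (σ j)) j /
          outDist p₂ (fun i j => lam * Wstar i j + (1 - lam) * Wstar i (σ j)) j)
      = lam * T j + (1 - lam) * T (σ j) := by
    intro j
    rw [hout p₁ j, hout p₂ j]
    simp only [hT]
    by_cases h0 : j = j₀
    · rw [h0, hσ0, hq0 p₁, hq0 p₂]
      simp only [mul_zero, zero_add]
      rw [cancel_logb _ _ _ hlam1']
      ring
    by_cases h1 : j = j'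
    · rw [h1, hσ1, hq0 p₁, hq0 p₂]
      simp only [mul_zero, add_zero]
      rw [cancel_logb _ _ _ hlam0]
      ring
    · have hσj : σ j = j := Equiv.swap_apply_of_ne_of_ne h0 h1
      rw [hσj]
      have e1 : lam * outDist p₁ Wstar j + (1 - lam) * outDist p₁ Wstar j
          = outDist p₁ Wstar j := by ring
      have e2 : lam * outDist p₂ Wstar j + (1 - lam) * outDist p₂ Wstar j
          = outDist p₂ Wstar j := by ring
      rw [e1, e2]; ring
  unfold klDiv2
  calc (∑ j, outDist p₁ (fun i j => lam * Wstar i j + (1 - lam) * Wstar i (σ j)) j *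
        Real.logb 2 (outDist p₁ (fun i j => lam * Wstar i j + (1 - lam) * Wstar i (σ j)) j /
          outDist p₂ (fun i j => lam * Wstar i j + (1 - lam) * Wstar i (σ j)) j))
      = ∑ j, (lam * T j + (1 - lam) * T (σ j)) := Finset.sum_congr rfl (fun j _ => hterm j)
    _ = lam * (∑ j, T j) + (1 - lam) * ∑ j, T (σ j) := by
        rw [Finset.sum_add_distrib, Finset.mul_sum, Finset.mul_sum]
    _ = ∑ j, T j := by rw [Equiv.sum_comp σ T]; ring

/-- If a feasible `W*` has an all-zero column `j₀` and `W̄` is obtained from `W*` by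
interchanging columns `j₀` and `j₁`, then every convex combination `λ W* + (1-λ) W̄` is
feasible and has the same utility `D(p₁ W ‖ p₂ W)` as `W*`.  In particular, if `W*` is
optimal then infinitely many feasible matrices are optimal. -/
theorem stmt4 {M : ℕ} (hM : 1 ≤ M) (p₁ p₂ : Fin M → ℝ)
    (h₁ : ∀ i, 0 < p₁ i) (h₂ : ∀ i, 0 < p₂ i)
    (hs₁ : ∑ i, p₁ i = 1) (hs₂ : ∑ i, p₂ i = 1)
    (l : ℝ) (hl0 : 0 ≤ l) (hl1 : l ≤ Real.logb 2 M)
    (Wstar : Fin M → Fin M → ℝ) (hWstar : Feasible hM l Wstar)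
    (j₀ j₁ : Fin M) (hj : j₁ ≠ j₀) (hzero : ∀ i, Wstar i j₀ = 0)
    (Wbar : Fin M → Fin M → ℝ)
    (hWbar : ∀ i j, Wbar i j = Wstar i (Equiv.swap j₀ j₁ j)) :
    (∀ lam ∈ Set.Icc (0 : ℝ) 1,
      Feasible hM l (fun i j => lam * Wstar i j + (1 - lam) * Wbar i j) ∧
      klDiv2 (outDist p₁ (fun i j => lam * Wstar i j + (1 - lam) * Wbar i j))
             (outDist p₂ (fun i j => lam * Wstar i j + (1 - lam) * Wbar i j)) =
        klDiv2 (outDist p₁ Wstar) (outDist p₂ Wstar)) ∧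
    ((∀ W, Feasible hM l W →
        klDiv2 (outDist p₁ W) (outDist p₂ W) ≤
          klDiv2 (outDist p₁ Wstar) (outDist p₂ Wstar)) →
      {W : Fin M → Fin M → ℝ | Feasible hM l W ∧
        klDiv2 (outDist p₁ W) (outDist p₂ W) =
          klDiv2 (outDist p₁ Wstar) (outDist p₂ Wstar)}.Infinite) := by

  have hmain : ∀ (j' : Fin M), j' ≠ j₀ → ∀ lam ∈ Set.Icc (0:ℝ) 1,
      Feasible hM l (fun i j => lam * Wstar i j + (1 - lam) * Wstar i (Equiv.swap j₀ j' j)) ∧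
      klDiv2 (outDist p₁ (fun i j => lam * Wstar i j + (1 - lam) * Wstar i (Equiv.swap j₀ j' j)))
             (outDist p₂ (fun i j => lam * Wstar i j + (1 - lam) * Wstar i (Equiv.swap j₀ j' j))) =
        klDiv2 (outDist p₁ Wstar) (outDist p₂ Wstar) :=
    fun j' hj' lam hlam => key hM p₁ p₂ l Wstar hWstar j₀ j' hj' hzero lam hlam
  constructor
  · intro lam hlam
    have hWl : (fun i j => lam * Wstar i j + (1 - lam) * Wbar i j)
        = fun i j => lam * Wstar i j + (1 - lam) * Wstar i (Equiv.swap j₀ j₁ j) := by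
      funext i j; rw [hWbar]
    rw [hWl]
    exact hmain j₁ hj lam hlam
  · intro _
    -- find a column j₂ ≠ j₀ with a positive entry in row i₀
    set i₀ : Fin M := ⟨0, hM⟩
    obtain ⟨j₂, hj₂pos⟩ : ∃ j, 0 < Wstar i₀ j := by
      by_contra h
      push_neg at h
      have hz : ∑ j, Wstar i₀ j = 0 :=
        Finset.sum_eq_zero (fun j _ => le_antisymm (h j) (hWstar.1 i₀ j))
      rw [hWstar.2.1 i₀] at hz; norm_num at hz
    have hj₂ : j₂ ≠ j₀ := by
      intro h; rw [h, hzero i₀] at hj₂pos; exact lt_irrefl 0 hj₂pos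
    set f : ℝ → (Fin M → Fin M → ℝ) :=
      fun lam => fun i j => lam * Wstar i j + (1 - lam) * Wstar i (Equiv.swap j₀ j₂ j) with hf
    have hsub : f '' Set.Icc (0:ℝ) 1 ⊆
        {W : Fin M → Fin M → ℝ | Feasible hM l W ∧
          klDiv2 (outDist p₁ W) (outDist p₂ W) =
            klDiv2 (outDist p₁ Wstar) (outDist p₂ Wstar)} := by
      rintro W ⟨lam, hlam, rfl⟩
      exact hmain j₂ hj₂ lam hlam
    have hinj : Set.InjOn f (Set.Icc (0:ℝ) 1) := by
      intro a _ b _ hab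
      have h2 := congrFun (congrFun hab i₀) j₂
      simp only [hf, Equiv.swap_apply_right, hzero i₀, mul_zero, add_zero] at h2
      exact mul_right_cancel₀ (ne_of_gt hj₂pos) h2
    have hicc : (Set.Icc (0:ℝ) 1).Infinite := Set.Icc_infinite zero_lt_one
    exact (hicc.image hinj).mono hsub
end

section
/- Let p₁, p₂ ∈ (0,1) with p₁ ≠ p₂, let l ∈ [0,1], and let S be the set of 2×2 row-stochastic matrices W with nonnegative entries satisfying Σ_{j=1}^{2} max_i W_{ij} ≤ 2^l. Then the maximum of D(π₁W ‖ π₂W) over W ∈ S, where π_k = (1−p_k, p_k), equals max{f₁(p₁,p₂,l), f₂(p₁,p₂,l)}, where f₁(p₁,p₂,l) = (p₁−1)(2^l−1)·log₂[ (1−p₂)((2−2^l)+p₁(2^l−1)) / ((1−p₁)((2−2^l)+p₂(2^l−1))) ] + log₂[ ((2−2^l)+p₁(2^l−1)) / ((2−2^l)+p₂(2^l−1)) ] and f₂(p₁,p₂,l) = p₁(2^l−1)·log₂[ p₁(1+p₂(1−2^l)) / (p₂(1+p₁(1−2^l))) ] + log₂[ (1+p₁(1−2^l)) / (1+p₂(1−2^l))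 ]. Moreover this maximum is attained by W₁ = [[2−2^l, 2^l−1],[1, 0]] when f₁ ≥ f₂ and by W₂ = [[0, 1],[2^l−1, 2−2^l]] when f₂ ≥ f₁. -/
/-- The utility `f₁` of the mechanism `W₁ = [[2-2^l, 2^l-1], [1, 0]]`. -/
noncomputable def f₁ (p₁ p₂ l : ℝ) : ℝ :=
  (p₁ - 1) * ((2 : ℝ) ^ l - 1) *
      Real.logb 2 ((1 - p₂) * ((2 - (2 : ℝ) ^ l) + p₁ * ((2 : ℝ) ^ l - 1)) /
        ((1 - p₁) * ((2 - (2 : ℝ) ^ l) + p₂ * ((2 : ℝ) ^ l - 1)))) +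
    Real.logb 2 (((2 - (2 : ℝ) ^ l) + p₁ * ((2 : ℝ) ^ l - 1)) /
        ((2 - (2 : ℝ) ^ l) + p₂ * ((2 : ℝ) ^ l - 1)))

/-- The utility `f₂` of the mechanism `W₂ = [[0, 1], [2^l-1, 2-2^l]]`. -/
noncomputable def f₂ (p₁ p₂ l : ℝ) : ℝ :=
  p₁ * ((2 : ℝ) ^ l - 1) *
      Real.logb 2 (p₁ * (1 + p₂ * (1 - (2 : ℝ) ^ l)) /
        (p₂ * (1 + p₁ * (1 - (2 : ℝ) ^ l)))) +
    Real.logb 2 ((1 + p₁ * (1 - (2 : ℝ) ^ l)) / (1 + p₂ * (1 - (2 : ℝ) ^ l)))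


open Real

/-- Two-point log-sum inequality. -/
lemma two_logsum (x₁ x₂ y₁ y₂ : ℝ) (hx₁ : 0 ≤ x₁) (hx₂ : 0 ≤ x₂) (hy₁ : 0 < y₁) (hy₂ : 0 < y₂) :
    (x₁ + x₂) * Real.log ((x₁ + x₂) / (y₁ + y₂)) ≤
      x₁ * Real.log (x₁ / y₁) + x₂ * Real.log (x₂ / y₂) := by
  have hy : 0 < y₁ + y₂ := by linarith
  have hw : y₁ / (y₁ + y₂) + y₂ / (y₁ + y₂) = 1 := by field_simp
  have h := Real.convexOn_mul_log.2 (Set.mem_Ici.mpr (div_nonneg hx₁ hy₁.le))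
    (Set.mem_Ici.mpr (div_nonneg hx₂ hy₂.le))
    (le_of_lt (div_pos hy₁ hy)) (le_of_lt (div_pos hy₂ hy)) hw
  simp only [smul_eq_mul] at h
  have harg : y₁ / (y₁ + y₂) * (x₁ / y₁) + y₂ / (y₁ + y₂) * (x₂ / y₂) = (x₁ + x₂) / (y₁ + y₂) := by
    field_simp
  rw [harg] at h
  have h' := mul_le_mul_of_nonneg_left h hy.le
  calc (x₁ + x₂) * Real.log ((x₁ + x₂) / (y₁ + y₂))
      = (y₁ + y₂) * ((x₁ + x₂) / (y₁ + y₂) * Real.log ((x₁ + x₂) / (y₁ + y₂))) := by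
        field_simp
    _ ≤ (y₁ + y₂) * (y₁ / (y₁ + y₂) * (x₁ / y₁ * Real.log (x₁ / y₁)) +
          y₂ / (y₁ + y₂) * (x₂ / y₂ * Real.log (x₂ / y₂))) := h'
    _ = x₁ * Real.log (x₁ / y₁) + x₂ * Real.log (x₂ / y₂) := by
        field_simp

/-- Joint convexity inequality for `x log (x/y)` (with junk values at 0 handled). -/
lemma gcvx (α β x₁ x₂ y₁ y₂ : ℝ) (hα : 0 ≤ α) (hβ : 0 ≤ β) (hab : α + β = 1)
    (hx₁ : 0 ≤ x₁) (hx₂ : 0 ≤ x₂) (hy₁ : 0 < y₁) (hy₂ : 0 < y₂) :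
    (α * x₁ + β * x₂) * Real.log ((α * x₁ + β * x₂) / (α * y₁ + β * y₂)) ≤
      α * (x₁ * Real.log (x₁ / y₁)) + β * (x₂ * Real.log (x₂ / y₂)) := by
  rcases eq_or_lt_of_le hα with hα0 | hαpos
  · have hβ1 : β = 1 := by linarith
    simp [← hα0, hβ1]
  rcases eq_or_lt_of_le hβ with hβ0 | hβpos
  · have hα1 : α = 1 := by linarith
    simp [← hβ0, hα1]
  have h := two_logsum (α * x₁) (β * x₂) (α * y₁) (β * y₂)
    (mul_nonneg hα hx₁) (mul_nonneg hβ hx₂) (mul_pos hαpos hy₁) (mul_pos hβpos hy₂)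
  rw [mul_div_mul_left x₁ y₁ hαpos.ne', mul_div_mul_left x₂ y₂ hβpos.ne'] at h
  calc (α * x₁ + β * x₂) * Real.log ((α * x₁ + β * x₂) / (α * y₁ + β * y₂))
      ≤ α * x₁ * Real.log (x₁ / y₁) + β * x₂ * Real.log (x₂ / y₂) := h
    _ = α * (x₁ * Real.log (x₁ / y₁)) + β * (x₂ * Real.log (x₂ / y₂)) := by ring

/-- Binary relative entropy with natural logarithm. -/
noncomputable def Dn (q r : ℝ) : ℝ :=
  q * Real.log (q / r) + (1 - q) * Real.log ((1 - q) / (1 - r))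

lemma Dn_self (x : ℝ) : Dn x x = 0 := by
  unfold Dn
  have h : ∀ y : ℝ, y * Real.log (y / y) = 0 := by
    intro y
    by_cases hy : y = 0
    · simp [hy]
    · simp [div_self hy]
  rw [h x, h (1 - x), add_zero]

lemma Dn_symm (q r : ℝ) : Dn (1 - q) (1 - r) = Dn q r := by
  unfold Dn
  rw [sub_sub_cancel, sub_sub_cancel]
  ring

/-- Gibbs: nonnegativity of binary relative entropy. -/
lemma Dn_nonneg {q r : ℝ} (hq0 : 0 ≤ q) (hq1 : q ≤ 1) (hr0 : 0 < r) (hr1 : r < 1) :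
    0 ≤ Dn q r := by
  have h := two_logsum q (1 - q) r (1 - r) hq0 (by linarith) hr0 (by linarith)
  have : q + (1 - q) = 1 := by ring
  rw [this] at h
  have : r + (1 - r) = 1 := by ring
  rw [this] at h
  simpa [Dn] using h

/-- Convexity of `Dn` along segments (with interior second arguments). -/
lemma Dn_slice (θ q₀ q₁ r₀ r₁ : ℝ) (hθ0 : 0 ≤ θ) (hθ1 : θ ≤ 1)
    (hq₀0 : 0 ≤ q₀) (hq₀1 : q₀ ≤ 1) (hq₁0 : 0 ≤ q₁) (hq₁1 : q₁ ≤ 1)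
    (hr₀0 : 0 < r₀) (hr₀1 : r₀ < 1) (hr₁0 : 0 < r₁) (hr₁1 : r₁ < 1) :
    Dn ((1 - θ) * q₀ + θ * q₁) ((1 - θ) * r₀ + θ * r₁) ≤
      (1 - θ) * Dn q₀ r₀ + θ * Dn q₁ r₁ := by
  have h1 := gcvx (1 - θ) θ q₀ q₁ r₀ r₁ (by linarith) hθ0 (by ring) hq₀0 hq₁0 hr₀0 hr₁0
  have h2 := gcvx (1 - θ) θ (1 - q₀) (1 - q₁) (1 - r₀) (1 - r₁) (by linarith) hθ0 (by ring)
    (by linarith) (by linarith) (by linarith) (by linarith)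
  have e1 : (1 - θ) * (1 - q₀) + θ * (1 - q₁) = 1 - ((1 - θ) * q₀ + θ * q₁) := by ring
  have e2 : (1 - θ) * (1 - r₀) + θ * (1 - r₁) = 1 - ((1 - θ) * r₀ + θ * r₁) := by ring
  rw [e1, e2] at h2
  unfold Dn
  linarith

lemma Dn_A_le (p₁ p₂ t s : ℝ) (h₁0 : 0 < p₁) (h₁1 : p₁ < 1) (h₂0 : 0 < p₂) (h₂1 : p₂ < 1)
    (ht : 0 < t) (ht1 : t ≤ 1) (hs0 : 0 ≤ s) (hst : s ≤ t) :
    Dn (p₁ * s) (p₂ * s) ≤ Dn (p₁ * t) (p₂ * t) := by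
  have hA0 : 0 ≤ Dn (p₁ * t) (p₂ * t) := by
    apply Dn_nonneg (by positivity) (by nlinarith) (by positivity) (by nlinarith)
  rcases eq_or_lt_of_le hs0 with h | hspos
  · rw [← h]
    simpa using (Dn_self 0).le.trans hA0
  set θ := s / t with hθdef
  have hθ0 : 0 ≤ θ := by positivity
  have hθ1 : θ ≤ 1 := div_le_one_of_le₀ hst ht.le
  have hθt : θ * t = s := div_mul_cancel₀ s ht.ne'
  have es : (p₁ * s) / (p₂ * s) = p₁ / p₂ := mul_div_mul_right _ _ hspos.ne'
  have et : (p₁ * t) / (p₂ * t) = p₁ / p₂ := mul_div_mul_right _ _ ht.ne'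
  have h2 := gcvx (1 - θ) θ 1 (1 - p₁ * t) 1 (1 - p₂ * t) (by linarith) hθ0 (by ring)
    (by norm_num) (by nlinarith) (by norm_num) (by nlinarith)
  have e1 : (1 - θ) * 1 + θ * (1 - p₁ * t) = 1 - p₁ * s := by rw [← hθt]; ring
  have e2 : (1 - θ) * 1 + θ * (1 - p₂ * t) = 1 - p₂ * s := by rw [← hθt]; ring
  rw [e1, e2] at h2
  simp only [div_self (one_ne_zero : (1:ℝ) ≠ 0), Real.log_one, mul_zero, mul_one, zero_add] at h2
  have elin : p₁ * s * Real.log (p₁ / p₂) = θ * (p₁ * t * Real.log (p₁ / p₂)) := by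
    rw [← hθt]; ring
  have hθA : θ * Dn (p₁ * t) (p₂ * t) ≤ Dn (p₁ * t) (p₂ * t) :=
    mul_le_of_le_one_left hA0 hθ1
  unfold Dn at *
  rw [es, et] at *
  linarith

lemma Dn_B_le (p₁ p₂ t s : ℝ) (h₁0 : 0 < p₁) (h₁1 : p₁ < 1) (h₂0 : 0 < p₂) (h₂1 : p₂ < 1)
    (ht : 0 < t) (ht1 : t ≤ 1) (hs0 : 0 ≤ s) (hst : s ≤ t) :
    Dn (1 - (1 - p₁) * s) (1 - (1 - p₂) * s) ≤ Dn (1 - (1 - p₁) * t) (1 - (1 - p₂) * t) := by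
  have h := Dn_A_le (1 - p₁) (1 - p₂) t s (by linarith) (by linarith) (by linarith) (by linarith)
    ht ht1 hs0 hst
  calc Dn (1 - (1 - p₁) * s) (1 - (1 - p₂) * s)
      = Dn ((1 - p₁) * s) ((1 - p₂) * s) := by
        rw [← Dn_symm ((1 - p₁) * s) ((1 - p₂) * s)]
    _ ≤ Dn ((1 - p₁) * t) ((1 - p₂) * t) := h
    _ = Dn (1 - (1 - p₁) * t) (1 - (1 - p₂) * t) := by
        rw [← Dn_symm ((1 - p₁) * t) ((1 - p₂) * t)]

lemma Dn_bound (p₁ p₂ t a s : ℝ) (h₁0 : 0 < p₁) (h₁1 : p₁ < 1) (h₂0 : 0 < p₂) (h₂1 : p₂ < 1)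
    (ht0 : 0 ≤ t) (ht1 : t ≤ 1) (ha : 0 ≤ a) (hs0 : 0 ≤ s) (has : a + s ≤ 1) (hst : s ≤ t) :
    Dn (a + p₁ * s) (a + p₂ * s) ≤
      max (Dn (1 - (1 - p₁) * t) (1 - (1 - p₂) * t)) (Dn (p₁ * t) (p₂ * t)) := by
  rcases eq_or_lt_of_le ht0 with ht | htpos
  · have hs : s = 0 := le_antisymm (by linarith) hs0
    have hRHS : Dn (p₁ * t) (p₂ * t) = 0 := by rw [← ht]; simpa using Dn_self 0
    rw [hs]
    simp only [mul_zero, add_zero]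
    rw [Dn_self a]
    exact le_max_of_le_right hRHS.ge
  have hA0 : 0 ≤ Dn (p₁ * t) (p₂ * t) := by
    apply Dn_nonneg (by positivity) (by nlinarith) (by positivity) (by nlinarith)
  rcases eq_or_lt_of_le hs0 with hs | hspos
  · rw [← hs]
    simp only [mul_zero, add_zero]
    rw [Dn_self a]
    exact le_max_of_le_right hA0
  rcases eq_or_lt_of_le (by linarith : s ≤ 1) with hs1 | hs1
  · have haz : a = 0 := by linarith
    rw [haz]
    simp only [zero_add]
    exact le_max_of_le_right (Dn_A_le p₁ p₂ t s h₁0 h₁1 h₂0 h₂1 htpos ht1 hs0 hst)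
  -- interior case: 0 < s < 1
  set θ := a / (1 - s) with hθdef
  have h1s : (0:ℝ) < 1 - s := by linarith
  have hθ0 : 0 ≤ θ := div_nonneg ha h1s.le
  have hθ1 : θ ≤ 1 := div_le_one_of_le₀ (by linarith) h1s.le
  have hθa : θ * (1 - s) = a := div_mul_cancel₀ a h1s.ne'
  have h := Dn_slice θ (p₁ * s) (1 - (1 - p₁) * s) (p₂ * s) (1 - (1 - p₂) * s) hθ0 hθ1
    (by positivity) (by nlinarith) (by nlinarith) (by nlinarith)
    (by positivity) (by nlinarith) (by nlinarith) (by nlinarith)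
  have e1 : (1 - θ) * (p₁ * s) + θ * (1 - (1 - p₁) * s) = a + p₁ * s := by
    rw [← hθa]; ring
  have e2 : (1 - θ) * (p₂ * s) + θ * (1 - (1 - p₂) * s) = a + p₂ * s := by
    rw [← hθa]; ring
  rw [e1, e2] at h
  have hAs := Dn_A_le p₁ p₂ t s h₁0 h₁1 h₂0 h₂1 htpos ht1 hs0 hst
  have hBs := Dn_B_le p₁ p₂ t s h₁0 h₁1 h₂0 h₂1 htpos ht1 hs0 hst
  set M := max (Dn (1 - (1 - p₁) * t) (1 - (1 - p₂) * t)) (Dn (p₁ * t) (p₂ * t)) with hM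
  have hA : Dn (p₁ * s) (p₂ * s) ≤ M := hAs.trans (le_max_right _ _)
  have hB : Dn (1 - (1 - p₁) * s) (1 - (1 - p₂) * s) ≤ M := hBs.trans (le_max_left _ _)
  calc Dn (a + p₁ * s) (a + p₂ * s)
      ≤ (1 - θ) * Dn (p₁ * s) (p₂ * s) + θ * Dn (1 - (1 - p₁) * s) (1 - (1 - p₂) * s) := h
    _ ≤ (1 - θ) * M + θ * M := by
        apply add_le_add (mul_le_mul_of_nonneg_left hA (by linarith))
          (mul_le_mul_of_nonneg_left hB hθ0)
    _ = M := by ring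


lemma f1_eq_Dn (p₁ p₂ l : ℝ) (h₁0 : 0 < p₁) (h₁1 : p₁ < 1) (h₂0 : 0 < p₂) (h₂1 : p₂ < 1)
    (h2l1 : 1 ≤ (2:ℝ)^l) (h2l2 : (2:ℝ)^l ≤ 2) :
    f₁ p₁ p₂ l =
      Dn (1 - (1 - p₁) * ((2:ℝ)^l - 1)) (1 - (1 - p₂) * ((2:ℝ)^l - 1)) / Real.log 2 := by
  set t : ℝ := (2:ℝ)^l - 1 with htdef
  have ht0 : 0 ≤ t := by simp [htdef]; linarith
  have ht1 : t ≤ 1 := by simp [htdef]; linarith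
  have e1 : 2 - (2:ℝ)^l + p₁ * ((2:ℝ)^l - 1) = 1 - (1 - p₁) * t := by rw [htdef]; ring
  have e2 : 2 - (2:ℝ)^l + p₂ * ((2:ℝ)^l - 1) = 1 - (1 - p₂) * t := by rw [htdef]; ring
  have hu₁ : 0 < 1 - (1 - p₁) * t := by nlinarith
  have hu₂ : 0 < 1 - (1 - p₂) * t := by nlinarith
  rcases eq_or_lt_of_le ht0 with ht | htpos
  · rw [f₁, ← htdef, e1, e2, ← ht]
    simp [Dn_self]
  · rw [f₁, ← htdef, e1, e2]
    unfold Dn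
    have k1 : (1:ℝ) - (1 - (1 - p₁) * t) = (1 - p₁) * t := by ring
    have k2 : (1:ℝ) - (1 - (1 - p₂) * t) = (1 - p₂) * t := by ring
    rw [k1, k2, mul_div_mul_right _ _ htpos.ne']
    have hq₁ : (0:ℝ) < 1 - p₁ := by linarith
    have hq₂ : (0:ℝ) < 1 - p₂ := by linarith
    rw [Real.logb, Real.logb, Real.log_div (mul_pos hq₂ hu₁).ne' (mul_pos hq₁ hu₂).ne',
      Real.log_mul hq₂.ne' hu₁.ne', Real.log_mul hq₁.ne' hu₂.ne',
      Real.log_div hu₁.ne' hu₂.ne', Real.log_div hq₁.ne' hq₂.ne']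
    field_simp
    ring

lemma f2_eq_Dn (p₁ p₂ l : ℝ) (h₁0 : 0 < p₁) (h₁1 : p₁ < 1) (h₂0 : 0 < p₂) (h₂1 : p₂ < 1)
    (h2l1 : 1 ≤ (2:ℝ)^l) (h2l2 : (2:ℝ)^l ≤ 2) :
    f₂ p₁ p₂ l = Dn (p₁ * ((2:ℝ)^l - 1)) (p₂ * ((2:ℝ)^l - 1)) / Real.log 2 := by
  set t : ℝ := (2:ℝ)^l - 1 with htdef
  have ht0 : 0 ≤ t := by simp [htdef]; linarith
  have ht1 : t ≤ 1 := by simp [htdef]; linarith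
  have e1 : 1 + p₁ * (1 - (2:ℝ)^l) = 1 - p₁ * t := by rw [htdef]; ring
  have e2 : 1 + p₂ * (1 - (2:ℝ)^l) = 1 - p₂ * t := by rw [htdef]; ring
  have hu₁ : 0 < 1 - p₁ * t := by nlinarith
  have hu₂ : 0 < 1 - p₂ * t := by nlinarith
  rcases eq_or_lt_of_le ht0 with ht | htpos
  · rw [f₂, ← htdef, e1, e2, ← ht]
    simp [Dn]
  · rw [f₂, ← htdef, e1, e2]
    unfold Dn
    rw [mul_div_mul_right _ _ htpos.ne']
    rw [Real.logb, Real.logb, Real.log_div (mul_pos h₁0 hu₂).ne' (mul_pos h₂0 hu₁).ne',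
      Real.log_mul h₁0.ne' hu₂.ne', Real.log_mul h₂0.ne' hu₁.ne',
      Real.log_div hu₁.ne' hu₂.ne', Real.log_div h₁0.ne' h₂0.ne']
    field_simp
    ring

lemma klDiv2_eq_Dn (q r : Fin 2 → ℝ) (hq : q 1 = 1 - q 0) (hr : r 1 = 1 - r 0) :
    klDiv2 q r = Dn (q 0) (r 0) / Real.log 2 := by
  unfold klDiv2 Dn
  rw [Fin.sum_univ_two, hq, hr, Real.logb, Real.logb]
  ring


lemma colMax_two (hM : 1 ≤ 2) (W : Fin 2 → Fin 2 → ℝ) (j : Fin 2) :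
    colMax hM W j = max (W 0 j) (W 1 j) := by
  unfold colMax
  apply le_antisymm
  · apply Finset.sup'_le
    intro i _
    fin_cases i
    · exact le_max_left _ _
    · exact le_max_right _ _
  · exact max_le (Finset.le_sup' (fun i => W i j) (Finset.mem_univ 0))
      (Finset.le_sup' (fun i => W i j) (Finset.mem_univ 1))

/-- Privacy-utility trade-off for binary sources: the maximum of `D(π₁ W ‖ π₂ W)` over all
`2 × 2` row-stochastic matrices `W` with `Σ_j max_i W i j ≤ 2^l` is
`max (f₁ p₁ p₂ l) (f₂ p₁ p₂ l)`, attained by `W₁ = [[2-2^l, 2^l-1], [1, 0]]` when `f₁ ≥ f₂`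
and by `W₂ = [[0, 1], [2^l-1, 2-2^l]]` when `f₂ ≥ f₁`. -/
theorem stmt8 (p₁ p₂ l : ℝ) (hp₁ : p₁ ∈ Set.Ioo (0 : ℝ) 1) (hp₂ : p₂ ∈ Set.Ioo (0 : ℝ) 1)
    (hne : p₁ ≠ p₂) (hl : l ∈ Set.Icc (0 : ℝ) 1) :
    (∀ W : Fin 2 → Fin 2 → ℝ, Feasible (by norm_num) l W →
      klDiv2 (outDist ![1 - p₁, p₁] W) (outDist ![1 - p₂, p₂] W) ≤
        max (f₁ p₁ p₂ l) (f₂ p₁ p₂ l)) ∧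
    Feasible (by norm_num) l (![![2 - (2 : ℝ) ^ l, (2 : ℝ) ^ l - 1], ![1, 0]]) ∧
    Feasible (by norm_num) l (![![0, 1], ![(2 : ℝ) ^ l - 1, 2 - (2 : ℝ) ^ l]]) ∧
    klDiv2 (outDist ![1 - p₁, p₁] (![![2 - (2 : ℝ) ^ l, (2 : ℝ) ^ l - 1], ![1, 0]]))
        (outDist ![1 - p₂, p₂] (![![2 - (2 : ℝ) ^ l, (2 : ℝ) ^ l - 1], ![1, 0]])) =
      f₁ p₁ p₂ l ∧
    klDiv2 (outDist ![1 - p₁, p₁] (![![0, 1], ![(2 : ℝ) ^ l - 1, 2 - (2 : ℝ) ^ l]]))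
        (outDist ![1 - p₂, p₂] (![![0, 1], ![(2 : ℝ) ^ l - 1, 2 - (2 : ℝ) ^ l]])) =
      f₂ p₁ p₂ l := by
  obtain ⟨hp₁0, hp₁1⟩ := hp₁
  obtain ⟨hp₂0, hp₂1⟩ := hp₂
  have hlog2 : (0:ℝ) < Real.log 2 := Real.log_pos one_lt_two
  have h2l1 : (1:ℝ) ≤ (2:ℝ) ^ l := by
    calc (1:ℝ) = (2:ℝ) ^ (0:ℝ) := (Real.rpow_zero 2).symm
      _ ≤ (2:ℝ) ^ l := Real.rpow_le_rpow_of_exponent_le one_le_two hl.1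
  have h2l2 : (2:ℝ) ^ l ≤ 2 := by
    calc (2:ℝ) ^ l ≤ (2:ℝ) ^ (1:ℝ) := Real.rpow_le_rpow_of_exponent_le one_le_two hl.2
      _ = 2 := Real.rpow_one 2
  have hf1 := f1_eq_Dn p₁ p₂ l hp₁0 hp₁1 hp₂0 hp₂1 h2l1 h2l2
  have hf2 := f2_eq_Dn p₁ p₂ l hp₁0 hp₁1 hp₂0 hp₂1 h2l1 h2l2
  refine ⟨?_, ?_, ?_, ?_, ?_⟩
  · -- main bound
    intro W hW
    obtain ⟨hnn, hrow, hleak⟩ := hW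
    have hW01 : W 0 1 = 1 - W 0 0 := by
      have := hrow 0; rw [Fin.sum_univ_two] at this; linarith
    have hW11 : W 1 1 = 1 - W 1 0 := by
      have := hrow 1; rw [Fin.sum_univ_two] at this; linarith
    have ha0 : 0 ≤ W 0 0 := hnn 0 0
    have hb0 : 0 ≤ W 1 0 := hnn 1 0
    have ha1 : W 0 0 ≤ 1 := by have := hnn 0 1; rw [hW01] at this; linarith
    have hb1 : W 1 0 ≤ 1 := by have := hnn 1 1; rw [hW11] at this; linarith
    rw [Fin.sum_univ_two, colMax_two, colMax_two, hW01, hW11] at hleak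
    have hm1 := le_max_left (W 0 0) (W 1 0)
    have hm2 := le_max_right (W 0 0) (W 1 0)
    have hm3 := le_max_left (1 - W 0 0) (1 - W 1 0)
    have hm4 := le_max_right (1 - W 0 0) (1 - W 1 0)
    have hd1 : W 1 0 - W 0 0 ≤ (2:ℝ) ^ l - 1 := by linarith
    have hd2 : W 0 0 - W 1 0 ≤ (2:ℝ) ^ l - 1 := by linarith
    have hq : outDist ![1 - p₁, p₁] W 1 = 1 - outDist ![1 - p₁, p₁] W 0 := by
      simp [outDist, Fin.sum_univ_two, hW01, hW11]; ring
    have hr : outDist ![1 - p₂, p₂] W 1 = 1 - outDist ![1 - p₂, p₂] W 0 := by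
      simp [outDist, Fin.sum_univ_two, hW01, hW11]; ring
    rw [klDiv2_eq_Dn _ _ hq hr]
    have hq0 : outDist ![1 - p₁, p₁] W 0 = (1 - p₁) * W 0 0 + p₁ * W 1 0 := by
      simp [outDist, Fin.sum_univ_two]
    have hr0 : outDist ![1 - p₂, p₂] W 0 = (1 - p₂) * W 0 0 + p₂ * W 1 0 := by
      simp [outDist, Fin.sum_univ_two]
    rw [hq0, hr0]
    have key : Dn ((1 - p₁) * W 0 0 + p₁ * W 1 0) ((1 - p₂) * W 0 0 + p₂ * W 1 0) ≤
        max (Dn (1 - (1 - p₁) * ((2:ℝ)^l - 1)) (1 - (1 - p₂) * ((2:ℝ)^l - 1)))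
          (Dn (p₁ * ((2:ℝ)^l - 1)) (p₂ * ((2:ℝ)^l - 1))) := by
      rcases le_total (W 0 0) (W 1 0) with hab | hab
      · rw [show (1 - p₁) * W 0 0 + p₁ * W 1 0 = W 0 0 + p₁ * (W 1 0 - W 0 0) by ring,
          show (1 - p₂) * W 0 0 + p₂ * W 1 0 = W 0 0 + p₂ * (W 1 0 - W 0 0) by ring]
        exact Dn_bound p₁ p₂ ((2:ℝ)^l - 1) (W 0 0) (W 1 0 - W 0 0) hp₁0 hp₁1 hp₂0 hp₂1
          (by linarith) (by linarith) ha0 (by linarith) (by linarith) hd1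
      · rw [show (1 - p₁) * W 0 0 + p₁ * W 1 0 = 1 - ((1 - W 0 0) + p₁ * (W 0 0 - W 1 0)) by ring,
          show (1 - p₂) * W 0 0 + p₂ * W 1 0 = 1 - ((1 - W 0 0) + p₂ * (W 0 0 - W 1 0)) by ring,
          Dn_symm]
        exact Dn_bound p₁ p₂ ((2:ℝ)^l - 1) (1 - W 0 0) (W 0 0 - W 1 0) hp₁0 hp₁1 hp₂0 hp₂1
          (by linarith) (by linarith) (by linarith) (by linarith) (by linarith) hd2
    rw [hf1, hf2]
    rcases le_max_iff.mp key with h | h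
    · exact le_max_of_le_left ((div_le_div_iff_of_pos_right hlog2).mpr h)
    · exact le_max_of_le_right ((div_le_div_iff_of_pos_right hlog2).mpr h)
  · -- feasibility of W₁
    refine ⟨?_, ?_, ?_⟩
    · intro i j
      fin_cases i <;> fin_cases j <;> simp <;> linarith
    · intro i
      fin_cases i <;> simp [Fin.sum_univ_two] <;> ring
    · rw [Fin.sum_univ_two, colMax_two, colMax_two]
      simp only [Matrix.cons_val', Matrix.cons_val_zero, Matrix.cons_val_one, Matrix.head_cons,
        Matrix.empty_val', Matrix.cons_val_fin_one, Matrix.head_fin_const]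
      rw [max_eq_right (by linarith : (2:ℝ) - 2^l ≤ 1), max_eq_left (by linarith : (0:ℝ) ≤ 2^l - 1)]
      linarith
  · -- feasibility of W₂
    refine ⟨?_, ?_, ?_⟩
    · intro i j
      fin_cases i <;> fin_cases j <;> simp <;> linarith
    · intro i
      fin_cases i <;> simp [Fin.sum_univ_two] <;> ring
    · rw [Fin.sum_univ_two, colMax_two, colMax_two]
      simp only [Matrix.cons_val', Matrix.cons_val_zero, Matrix.cons_val_one, Matrix.head_cons,
        Matrix.empty_val', Matrix.cons_val_fin_one, Matrix.head_fin_const]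
      rw [max_eq_right (by linarith : (0:ℝ) ≤ 2^l - 1), max_eq_left (by linarith : (2:ℝ) - 2^l ≤ 1)]
      linarith
  · -- value at W₁
    have hq : outDist ![1 - p₁, p₁] ![![2 - (2:ℝ)^l, (2:ℝ)^l - 1], ![1, 0]] 1 =
        1 - outDist ![1 - p₁, p₁] ![![2 - (2:ℝ)^l, (2:ℝ)^l - 1], ![1, 0]] 0 := by
      simp [outDist, Fin.sum_univ_two]; ring
    have hr : outDist ![1 - p₂, p₂] ![![2 - (2:ℝ)^l, (2:ℝ)^l - 1], ![1, 0]] 1 =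
        1 - outDist ![1 - p₂, p₂] ![![2 - (2:ℝ)^l, (2:ℝ)^l - 1], ![1, 0]] 0 := by
      simp [outDist, Fin.sum_univ_two]; ring
    rw [klDiv2_eq_Dn _ _ hq hr]
    have hq0 : outDist ![1 - p₁, p₁] ![![2 - (2:ℝ)^l, (2:ℝ)^l - 1], ![1, 0]] 0 =
        1 - (1 - p₁) * ((2:ℝ)^l - 1) := by
      simp [outDist, Fin.sum_univ_two]; ring
    have hr0 : outDist ![1 - p₂, p₂] ![![2 - (2:ℝ)^l, (2:ℝ)^l - 1], ![1, 0]] 0 =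
        1 - (1 - p₂) * ((2:ℝ)^l - 1) := by
      simp [outDist, Fin.sum_univ_two]; ring
    rw [hq0, hr0, hf1]
  · -- value at W₂
    have hq : outDist ![1 - p₁, p₁] ![![0, 1], ![(2:ℝ)^l - 1, 2 - (2:ℝ)^l]] 1 =
        1 - outDist ![1 - p₁, p₁] ![![0, 1], ![(2:ℝ)^l - 1, 2 - (2:ℝ)^l]] 0 := by
      simp [outDist, Fin.sum_univ_two]; ring
    have hr : outDist ![1 - p₂, p₂] ![![0, 1], ![(2:ℝ)^l - 1, 2 - (2:ℝ)^l]] 1 =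
        1 - outDist ![1 - p₂, p₂] ![![0, 1], ![(2:ℝ)^l - 1, 2 - (2:ℝ)^l]] 0 := by
      simp [outDist, Fin.sum_univ_two]; ring
    rw [klDiv2_eq_Dn _ _ hq hr]
    have hq0 : outDist ![1 - p₁, p₁] ![![0, 1], ![(2:ℝ)^l - 1, 2 - (2:ℝ)^l]] 0 =
        p₁ * ((2:ℝ)^l - 1) := by
      simp [outDist, Fin.sum_univ_two]
    have hr0 : outDist ![1 - p₂, p₂] ![![0, 1], ![(2:ℝ)^l - 1, 2 - (2:ℝ)^l]] 0 =
        p₂ * ((2:ℝ)^l - 1) := by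
      simp [outDist, Fin.sum_univ_two]
    rw [hq0, hr0, hf2]
end

section
/- Let p₁ and p₂ be probability vectors on {1,…,M}, let W be an M×M matrix with real entries, and let w₀ = (w₀₁,…,w₀_M) be a vector with strictly positive entries. Then Σ_{j=1}^{M} ( Σ_i (p₁ᵢ − p₂ᵢ) W_{ij} )² / w₀ⱼ ≤ (1/4)·‖p₁ − p₂‖₁² · Σ_{j=1}^{M} (max_i W_{ij} − min_i W_{ij})² / w₀ⱼ. -/
/-- The minimum of column `j` of the matrix `W` (entries `W i j`). -/
noncomputable def colMin {M : ℕ} (hM : 1 ≤ M) (W : Fin M → Fin M → ℝ) (j : Fin M) : ℝ :=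
  Finset.univ.inf' (Finset.univ_nonempty_iff.mpr ⟨⟨0, hM⟩⟩) (fun i => W i j)

lemma key_s11 {M : ℕ} (hM : 1 ≤ M) (x : Fin M → ℝ) (hx : ∑ i, x i = 0)
    (W : Fin M → Fin M → ℝ) (j : Fin M) :
    |∑ i, x i * W i j| ≤ (∑ i, |x i|) * ((colMax hM W j - colMin hM W j) / 2) := by
  set c : ℝ := (colMax hM W j + colMin hM W j) / 2 with hc
  have h1 : ∑ i, x i * W i j = ∑ i, x i * (W i j - c) := by
    simp [mul_sub, Finset.sum_sub_distrib, ← Finset.sum_mul, hx]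
  rw [h1]
  calc |∑ i, x i * (W i j - c)| ≤ ∑ i, |x i * (W i j - c)| := Finset.abs_sum_le_sum_abs _ _
    _ ≤ ∑ i, |x i| * ((colMax hM W j - colMin hM W j) / 2) := by
        apply Finset.sum_le_sum
        intro i _
        rw [abs_mul]
        apply mul_le_mul_of_nonneg_left _ (abs_nonneg _)
        rw [abs_le]
        have hmax : W i j ≤ colMax hM W j := by
          unfold colMax; exact Finset.le_sup' (fun i => W i j) (Finset.mem_univ i)
        have hmin : colMin hM W j ≤ W i j := by
          unfold colMin; exact Finset.inf'_le (fun i => W i j) (Finset.mem_univ i)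
        constructor <;> simp only [hc] <;> linarith
    _ = (∑ i, |x i|) * ((colMax hM W j - colMin hM W j) / 2) := by
        rw [← Finset.sum_mul]

/-- For probability vectors `p₁, p₂`, any `M × M` real matrix `W`, and a positive weight
vector `w₀`, the EIT objective `Σ_j (Σ_i (p₁ i - p₂ i) W i j)² / w₀ j` is at most
`(1/4) ‖p₁ - p₂‖₁² Σ_j (max_i W i j - min_i W i j)² / w₀ j`. -/
theorem stmt11 {M : ℕ} (hM : 1 ≤ M) (p₁ p₂ : Fin M → ℝ)
    (h₁ : ∀ i, 0 ≤ p₁ i) (h₂ : ∀ i, 0 ≤ p₂ i)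
    (hs₁ : ∑ i, p₁ i = 1) (hs₂ : ∑ i, p₂ i = 1)
    (W : Fin M → Fin M → ℝ) (w₀ : Fin M → ℝ) (hw₀ : ∀ j, 0 < w₀ j) :
    ∑ j, (∑ i, (p₁ i - p₂ i) * W i j) ^ 2 / w₀ j ≤
      (1 / 4) * (∑ i, |p₁ i - p₂ i|) ^ 2 *
        ∑ j, (colMax hM W j - colMin hM W j) ^ 2 / w₀ j := by
  set x : Fin M → ℝ := fun i => p₁ i - p₂ i with hxdef
  have hx : ∑ i, x i = 0 := by simp [hxdef, Finset.sum_sub_distrib, hs₁, hs₂]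
  set S : ℝ := ∑ i, |x i| with hS
  have hSnn : 0 ≤ S := Finset.sum_nonneg fun i _ => abs_nonneg _
  calc ∑ j, (∑ i, x i * W i j) ^ 2 / w₀ j
      ≤ ∑ j, ((1/4) * S ^ 2 * (colMax hM W j - colMin hM W j) ^ 2) / w₀ j := by
        apply Finset.sum_le_sum
        intro j _
        have hb := key_s11 hM x hx W j
        have hsq : (∑ i, x i * W i j) ^ 2 ≤ (S * ((colMax hM W j - colMin hM W j) / 2)) ^ 2 := by
          rw [← sq_abs]
          exact pow_le_pow_left₀ (abs_nonneg _) hb 2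
        have hle : (∑ i, x i * W i j) ^ 2 ≤ (1/4) * S ^ 2 * (colMax hM W j - colMin hM W j) ^ 2 := by
          nlinarith [hsq]
        exact div_le_div_of_nonneg_right hle (hw₀ j).le
    _ = (1 / 4) * S ^ 2 * ∑ j, (colMax hM W j - colMin hM W j) ^ 2 / w₀ j := by
        rw [Finset.mul_sum]; congr 1; ext j; ring
end

section
/- Let p₁ and p₂ be probability vectors on {1,…,M} with full support, and define the M×M matrix Ψ (the derivative of D(p₁W‖p₂W) at W = identity, in natural-log units) by Ψ_{ij} = p₁ᵢ·(ln(p₁ⱼ/p₂ⱼ) + 1) − p₂ᵢ·(p₁ⱼ/p₂ⱼ). Then for every i and j, Ψ_{ii} ≥ Ψ_{ij}; that is, in every row of Ψ the maximal entry lies on the diagonal. In particular Ψ_{ii} = p₁ᵢ·ln(p₁ᵢ/p₂ᵢ). -/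
/-- For fully supported probability vectors `p₁, p₂`, the derivative matrix
`Ψ i j = p₁ i (ln (p₁ j / p₂ j) + 1) - p₂ i (p₁ j / p₂ j)` of `W ↦ D(p₁W‖p₂W)` at the
identity has its row-wise maxima on the diagonal, and `Ψ i i = p₁ i ln (p₁ i / p₂ i)`. -/
theorem stmt14 {M : ℕ} (p₁ p₂ : Fin M → ℝ)
    (h₁ : ∀ i, 0 < p₁ i) (h₂ : ∀ i, 0 < p₂ i)
    (hs₁ : ∑ i, p₁ i = 1) (hs₂ : ∑ i, p₂ i = 1)
    (Ψ : Fin M → Fin M → ℝ)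
    (hΨ : ∀ i j, Ψ i j = p₁ i * (Real.log (p₁ j / p₂ j) + 1) - p₂ i * (p₁ j / p₂ j)) :
    (∀ i j, Ψ i j ≤ Ψ i i) ∧ (∀ i, Ψ i i = p₁ i * Real.log (p₁ i / p₂ i)) := by
  constructor
  · intro i j
    rw [hΨ, hΨ]
    have hai := h₁ i; have hbi := h₂ i; have haj := h₁ j; have hbj := h₂ j
    have hrj : 0 < p₁ j / p₂ j := div_pos haj hbj
    have hr : 0 < p₁ i / p₂ i := div_pos hai hbi
    have key : Real.log ((p₁ j / p₂ j) / (p₁ i / p₂ i)) ≤ (p₁ j / p₂ j) / (p₁ i / p₂ i) - 1 :=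
      Real.log_le_sub_one_of_pos (div_pos hrj hr)
    rw [Real.log_div (ne_of_gt hrj) (ne_of_gt hr)] at key
    have h2 : p₁ i * (Real.log (p₁ j / p₂ j) - Real.log (p₁ i / p₂ i)) ≤
        p₁ i * ((p₁ j / p₂ j) / (p₁ i / p₂ i) - 1) :=
      mul_le_mul_of_nonneg_left key hai.le
    have h3 : p₁ i * ((p₁ j / p₂ j) / (p₁ i / p₂ i)) = p₂ i * (p₁ j / p₂ j) := by
      field_simp
    have h4 : p₂ i * (p₁ i / p₂ i) = p₁ i := by rw [mul_div_cancel₀ _ (h₂ i).ne']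
    nlinarith [h2, h3, h4]
  · intro i
    rw [hΨ]
    have h4 : p₂ i * (p₁ i / p₂ i) = p₁ i := by rw [mul_div_cancel₀ _ (h₂ i).ne']
    rw [h4]; ring
end

section
/- Let M ≥ 2 and let l satisfy log₂(M−1) ≤ l ≤ log₂ M. Let σ be any function from {1,…,M} to {1,…,M} with σ(i) ≠ i for all i, and define the M×M matrix W by W_{ii} = 2^l/M for all i, W_{i,σ(i)} = (M−2^l)/M for all i, and W_{ij} = 0 otherwise. Then W is row-stochastic with nonnegative entries, each row of W has at most two nonzero entries, W has at least M(M−2) zero entries, all diagonal entries of W are positive, and Σ_{j=1}^{M} max_i W_{ij} = 2^l. -/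
/-- High-utility regime construction: for `M ≥ 2`, `log₂(M-1) ≤ l ≤ log₂ M`, and any map
`σ` with `σ i ≠ i`, the matrix with diagonal entries `2^l / M`, entries `(M - 2^l)/M` at
positions `(i, σ i)`, and zeros elsewhere is row-stochastic with nonnegative entries, has at
most two nonzero entries per row, at least `M(M-2)` zero entries, positive diagonal, and
sum of column maxima exactly `2^l`. -/
theorem stmt15 {M : ℕ} (hM : 2 ≤ M) (l : ℝ)
    (hl1 : Real.logb 2 ((M : ℝ) - 1) ≤ l) (hl2 : l ≤ Real.logb 2 (M : ℝ))
    (σ : Fin M → Fin M) (hσ : ∀ i, σ i ≠ i)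
    (W : Fin M → Fin M → ℝ)
    (hW : ∀ i j, W i j =
      if j = i then (2 : ℝ) ^ l / M
      else if j = σ i then ((M : ℝ) - (2 : ℝ) ^ l) / M
      else 0) :
    (∀ i j, 0 ≤ W i j) ∧ (∀ i, ∑ j, W i j = 1) ∧
    (∀ i, (Finset.univ.filter (fun j => W i j ≠ 0)).card ≤ 2) ∧
    (M * (M - 2) ≤ (Finset.univ.filter (fun q : Fin M × Fin M => W q.1 q.2 = 0)).card) ∧
    (∀ i, 0 < W i i) ∧
    ∑ j, colMax (by omega) W j = (2 : ℝ) ^ l := by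
  have hM0 : (0:ℝ) < M := by exact_mod_cast Nat.lt_of_lt_of_le (by norm_num) hM
  have hM2 : (2:ℝ) ≤ M := by exact_mod_cast hM
  have hP0 : (0:ℝ) < (2:ℝ) ^ l := Real.rpow_pos_of_pos (by norm_num) l
  have hP1 : (M:ℝ) - 1 ≤ (2:ℝ) ^ l :=
    (Real.logb_le_iff_le_rpow (by norm_num) (by linarith)).mp hl1
  have hP2 : (2:ℝ) ^ l ≤ M :=
    (Real.le_logb_iff_rpow_le (by norm_num) (by linarith)).mp hl2
  have hdiag : (0:ℝ) < (2:ℝ) ^ l / M := div_pos hP0 hM0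
  have hoff : (0:ℝ) ≤ ((M:ℝ) - (2:ℝ) ^ l) / M := by
    apply div_nonneg _ hM0.le; linarith
  have hnn : ∀ i j, 0 ≤ W i j := by
    intro i j
    rw [hW i j]
    split_ifs
    · exact hdiag.le
    · exact hoff
    · exact le_rfl
  have hzero : ∀ i j, j ≠ i → j ≠ σ i → W i j = 0 := by
    intro i j h1 h2
    rw [hW i j, if_neg h1, if_neg h2]
  have hsubset : ∀ i, (Finset.univ.filter (fun j => W i j ≠ 0)) ⊆ {i, σ i} := by
    intro i j hj
    simp only [Finset.mem_filter] at hj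
    by_contra hc
    simp only [Finset.mem_insert, Finset.mem_singleton] at hc
    push_neg at hc
    exact hj.2 (hzero i j hc.1 hc.2)
  have hrow : ∀ i, ∑ j, W i j = 1 := by
    intro i
    rw [← Finset.sum_subset (Finset.subset_univ ({i, σ i} : Finset (Fin M)))
      (fun j _ hj => by
        simp only [Finset.mem_insert, Finset.mem_singleton] at hj
        push_neg at hj
        exact hzero i j hj.1 hj.2)]
    rw [Finset.sum_pair (Ne.symm (hσ i))]
    rw [hW i i, hW i (σ i), if_pos rfl, if_neg (hσ i), if_pos rfl]
    field_simp
    ring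
  refine ⟨hnn, hrow, ?_, ?_, ?_, ?_⟩
  · intro i
    calc (Finset.univ.filter (fun j => W i j ≠ 0)).card
        ≤ ({i, σ i} : Finset (Fin M)).card := Finset.card_le_card (hsubset i)
      _ ≤ 2 := Finset.card_insert_le _ _ |>.trans (by simp)
  · have hsub2 : (Finset.univ.filter (fun q : Fin M × Fin M => ¬ W q.1 q.2 = 0))
        ⊆ (Finset.univ.filter (fun q : Fin M × Fin M => q.2 = q.1)) ∪
          (Finset.univ.filter (fun q : Fin M × Fin M => q.2 = σ q.1)) := by
      intro q hq
      simp only [Finset.mem_filter, Finset.mem_union, Finset.mem_univ, true_and] at *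
      by_contra hc
      push_neg at hc
      exact hq (hzero q.1 q.2 hc.1 hc.2)
    have hc1 : (Finset.univ.filter (fun q : Fin M × Fin M => q.2 = q.1)).card ≤ M := by
      have := Finset.card_le_card_of_injOn (f := Prod.fst)
        (s := Finset.univ.filter (fun q : Fin M × Fin M => q.2 = q.1)) (t := Finset.univ)
        (fun q _ => Finset.mem_univ _)
        (by
          intro q hq q' hq' h
          simp only [Finset.coe_filter, Set.mem_setOf_eq] at hq hq'
          exact Prod.ext h (by rw [hq.2, hq'.2, h]))
      simpa using this
    have hc2 : (Finset.univ.filter (fun q : Fin M × Fin M => q.2 = σ q.1)).card ≤ M := by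
      have := Finset.card_le_card_of_injOn (f := Prod.fst)
        (s := Finset.univ.filter (fun q : Fin M × Fin M => q.2 = σ q.1)) (t := Finset.univ)
        (fun q _ => Finset.mem_univ _)
        (by
          intro q hq q' hq' h
          simp only [Finset.coe_filter, Set.mem_setOf_eq] at hq hq'
          exact Prod.ext h (by rw [hq.2, hq'.2, h]))
      simpa using this
    have hne : (Finset.univ.filter (fun q : Fin M × Fin M => ¬ W q.1 q.2 = 0)).card ≤ 2 * M := by
      calc _ ≤ _ := Finset.card_le_card hsub2
        _ ≤ _ := Finset.card_union_le _ _
        _ ≤ 2 * M := by omega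
    have htot := Finset.card_filter_add_card_filter_not
      (s := (Finset.univ : Finset (Fin M × Fin M)))
      (p := fun q : Fin M × Fin M => W q.1 q.2 = 0)
    have hcard : (Finset.univ : Finset (Fin M × Fin M)).card = M * M := by
      simp [Finset.card_univ]
    have hmm : M * (M - 2) + 2 * M = M * M := by
      have : M - 2 + 2 = M := by omega
      calc M * (M - 2) + 2 * M = M * ((M - 2) + 2) := by ring
        _ = M * M := by rw [this]
    omega
  · intro i
    rw [hW i i, if_pos rfl]; exact hdiag
  · have hcol : ∀ j, colMax (show 1 ≤ M by omega) W j = (2:ℝ) ^ l / M := by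
      intro j
      apply le_antisymm
      · apply Finset.sup'_le
        intro i _
        rw [hW i j]
        split_ifs
        · exact le_rfl
        · rw [div_le_div_iff_of_pos_right hM0]; linarith
        · exact hdiag.le
      · have := Finset.le_sup' (fun i => W i j) (Finset.mem_univ j)
        rw [hW j j, if_pos rfl] at this
        exact this
    rw [Finset.sum_congr rfl (fun j _ => hcol j)]
    rw [Finset.sum_const, Finset.card_univ, Fintype.card_fin, nsmul_eq_mul]
    field_simp
end
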